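/- Let p > 2 be prime and c coprime to p. For integers a, b with p ∤ a and p ∤ b, there exist x, y with x*y ≡ c (mod p) and (x+a)*(y+b) ≡ c (mod p) and p ∤ x if and only if the Legendre symbol identity ((a*b)/p) * ((a*b - 4*c)/p) = 1 holds or p divides a*b - 4*c. -/

import Mathlib

theorem stmt_2 (p : ℕ) [Fact p.Prime] (hp2 : 2 < p) (c a b : ℤ)
    (hc : IsCoprime c (p : ℤ)) (ha : ¬ (p : ℤ) ∣ a) (hb : ¬ (p : ℤ) ∣ b) :
    (∃ x y : ℤ, ¬ (p : ℤ) ∣ x ∧ x * y ≡ c [ZMOD (p : ℤ)] ∧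
        (x + a) * (y + b) ≡ c [ZMOD (p : ℤ)]) ↔
      (legendreSym p (a * b) * legendreSym p (a * b - 4 * c) = 1 ∨
        (p : ℤ) ∣ (a * b - 4 * c)) := by
  have hp : p.Prime := Fact.out
  haveI : NeZero p := ⟨hp.ne_zero⟩
  have hA : ((a : ZMod p)) ≠ 0 := by
    rwa [Ne, ZMod.intCast_zmod_eq_zero_iff_dvd]
  have hB : ((b : ZMod p)) ≠ 0 := by
    rwa [Ne, ZMod.intCast_zmod_eq_zero_iff_dvd]
  have hC : ((c : ZMod p)) ≠ 0 := by
    rw [Ne, ZMod.intCast_zmod_eq_zero_iff_dvd]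
    intro h
    have hu : IsUnit (p : ℤ) := hc.isUnit_of_dvd' h dvd_rfl
    rcases Int.isUnit_iff.mp hu with h1 | h1 <;> omega
  have h2 : (2 : ZMod p) ≠ 0 := by
    have : ((2 : ℕ) : ZMod p) ≠ 0 := by
      rw [Ne, ZMod.natCast_eq_zero_iff]
      intro h; have := Nat.le_of_dvd (by norm_num) h; omega
    simpa using this
  haveI : NeZero (2 : ZMod p) := ⟨h2⟩
  set A := ((a : ZMod p)) with hAdef
  set B := ((b : ZMod p)) with hBdef
  set C := ((c : ZMod p)) with hCdef
  -- Step 1+2: LHS ↔ quadratic has a root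
  have step : (∃ x y : ℤ, ¬ (p : ℤ) ∣ x ∧ x * y ≡ c [ZMOD (p : ℤ)] ∧
        (x + a) * (y + b) ≡ c [ZMOD (p : ℤ)]) ↔
      ∃ X : ZMod p, B * (X * X) + A * B * X + A * C = 0 := by
    constructor
    · rintro ⟨x, y, hx, h1, h2'⟩
      refine ⟨(x : ZMod p), ?_⟩
      have hx1 : ((x : ZMod p)) * (y : ZMod p) = C := by
        have := (ZMod.intCast_eq_intCast_iff _ _ _).mpr h1
        push_cast at this ⊢; exact this
      have hx2 : ((x : ZMod p) + A) * ((y : ZMod p) + B) = C := by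
        have := (ZMod.intCast_eq_intCast_iff _ _ _).mpr h2'
        push_cast at this ⊢; exact this
      linear_combination (x : ZMod p) * hx2 - (A + (x : ZMod p)) * hx1
    · rintro ⟨X, hX⟩
      have hXne : X ≠ 0 := by
        rintro rfl
        simp at hX
        tauto
      obtain ⟨x, rfl⟩ := ZMod.intCast_surjective (n := p) X
      obtain ⟨y, hy⟩ := ZMod.intCast_surjective (n := p) (C * (x : ZMod p)⁻¹)
      refine ⟨x, y, ?_, ?_, ?_⟩
      · rw [← ZMod.intCast_zmod_eq_zero_iff_dvd]; exact hXne
      · rw [← ZMod.intCast_eq_intCast_iff]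
        push_cast
        rw [hy]
        field_simp
        rfl
      · rw [← ZMod.intCast_eq_intCast_iff]
        push_cast
        rw [hy]
        field_simp
        linear_combination hX
  rw [step]
  -- Step 3: root ↔ discriminant square
  have disc_eq : discrim B (A * B) (A * C) = (A * B) * (A * B - 4 * C) := by
    rw [discrim]; ring
  have step2 : (∃ X : ZMod p, B * (X * X) + A * B * X + A * C = 0) ↔
      IsSquare ((A * B) * (A * B - 4 * C)) := by
    constructor
    · rintro ⟨X, hX⟩
      rw [quadratic_eq_zero_iff_discrim_eq_sq hB X, disc_eq] at hX
      exact ⟨2 * B * X + A * B, by rw [hX]; ring⟩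
    · rintro ⟨s, hs⟩
      exact exists_quadratic_eq_zero hB ⟨s, by rw [disc_eq, hs]⟩
  rw [step2]
  -- Step 4: square ↔ legendre condition
  by_cases hd : (p : ℤ) ∣ (a * b - 4 * c)
  · have hd0 : A * B - 4 * C = 0 := by
      have := (ZMod.intCast_zmod_eq_zero_iff_dvd (a * b - 4 * c) p).mpr hd
      push_cast at this
      linear_combination this
    simp only [hd0, mul_zero]
    exact ⟨fun _ => Or.inr hd, fun _ => ⟨0, by ring⟩⟩
  · have hd0 : A * B - 4 * C ≠ 0 := by
      intro h
      apply hd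
      rw [← ZMod.intCast_zmod_eq_zero_iff_dvd]
      push_cast
      linear_combination h
    have hne : (((a * b * (a * b - 4 * c) : ℤ)) : ZMod p) ≠ 0 := by
      push_cast
      exact mul_ne_zero (mul_ne_zero hA hB) hd0
    rw [← legendreSym.mul]
    rw [legendreSym.eq_one_iff p hne]
    constructor
    · intro h; left
      convert h using 2
      push_cast; ring
    · rintro (h | h)
      · convert h using 2
        push_cast; ring
      · exact absurd h hd
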